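/- (Star-shaped determinant formula.) Let b be a real number, let k ≥ 1, and for each i = 1, …, k let B_i be a square real matrix of size n_i ≥ 1 (indexed by {1,…,n_i}). Let M be the square matrix of size 1 + n_1 + ⋯ + n_k, indexed by a central index * together with the disjoint union of the index sets of the B_i, defined by: M(*,*) = b; M(*, (i,1)) = M((i,1), *) = −1 for each i; M((i,s),(i,t)) = (B_i)_{s,t}; and all other entries 0 (in particular, entries between different blocks, and between * and non-first indices of a block, vanish). Then det M = b · ∏_{i=1}^{k} det B_i − ∑_{i=1}^{k} ( det B_i⁰ · ∏_{j ≠ i} det B_j ), where B_i⁰ is the matrix obtained from B_i by deleting its first row and first column (with the convention that the determinant of the empty 0×0 matrix is 1). -/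

import Mathlib

/-- The star-shaped matrix with central entry `b`, blocks `B i`, and `-1`
connecting the central index to the first index of each block. -/
def starMatrix {k : ℕ} (b : ℝ) (n : Fin k → ℕ)
    (B : ∀ i, Matrix (Fin (n i)) (Fin (n i)) ℝ) :
    Matrix (Unit ⊕ Σ i : Fin k, Fin (n i)) (Unit ⊕ Σ i : Fin k, Fin (n i)) ℝ :=
  Matrix.of fun p q =>
    match p, q with
    | Sum.inl _, Sum.inl _ => b
    | Sum.inl _, Sum.inr ⟨_, s⟩ => if (s : ℕ) = 0 then -1 else 0
    | Sum.inr ⟨_, s⟩, Sum.inl _ => if (s : ℕ) = 0 then -1 else 0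
    | Sum.inr ⟨i, s⟩, Sum.inr ⟨j, t⟩ =>
        if h : i = j then B i s (Fin.cast (congrArg n h.symm) t) else 0

/-- The block `B i` with its first row and first column deleted. -/
def deleteFirst {m : ℕ} (B : Matrix (Fin m) (Fin m) ℝ) :
    Matrix (Fin (m - 1)) (Fin (m - 1)) ℝ :=
  B.submatrix (fun s => ⟨(s : ℕ) + 1, by omega⟩) (fun s => ⟨(s : ℕ) + 1, by omega⟩)

open Matrix

section Aux

lemma det_updateRow_sum'' {ι : Type*} [DecidableEq ι] [Fintype ι] (M : Matrix ι ι ℝ) (p : ι)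
    {α : Type*} (s : Finset α) (f : α → ι → ℝ) :
    (M.updateRow p (∑ a ∈ s, f a)).det = ∑ a ∈ s, (M.updateRow p (f a)).det := by
  classical
  induction s using Finset.induction with
  | empty =>
      rw [Finset.sum_empty, show (0 : ι → ℝ) = (0 : ℝ) • (0 : ι → ℝ) from (zero_smul ℝ _).symm,
        Matrix.det_updateRow_smul, zero_mul, Finset.sum_empty]
  | @insert a s hnotmem ih =>
      rw [Finset.sum_insert hnotmem, Matrix.det_updateRow_add, ih, Finset.sum_insert hnotmem]

lemma det_updateColumn_sum'' {ι : Type*} [DecidableEq ι] [Fintype ι] (M : Matrix ι ι ℝ) (p : ι)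
    {α : Type*} (s : Finset α) (f : α → ι → ℝ) :
    (M.updateCol p (∑ a ∈ s, f a)).det = ∑ a ∈ s, (M.updateCol p (f a)).det := by
  classical
  induction s using Finset.induction with
  | empty =>
      rw [Finset.sum_empty, show (0 : ι → ℝ) = (0 : ℝ) • (0 : ι → ℝ) from (zero_smul ℝ _).symm,
        Matrix.det_updateCol_smul, zero_mul, Finset.sum_empty]
  | @insert a s hnotmem ih =>
      rw [Finset.sum_insert hnotmem, Matrix.det_updateCol_add, ih, Finset.sum_insert hnotmem]

lemma det_unitRow {κ : Type*} [Fintype κ] [DecidableEq κ] (M : Matrix (Unit ⊕ κ) (Unit ⊕ κ) ℝ)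
    (h : ∀ q, M (Sum.inl ()) q = if q = Sum.inl () then 1 else 0) :
    M.det = (Matrix.of fun p q => M (Sum.inr p) (Sum.inr q)).det := by
  have hM : M = Matrix.fromBlocks (Matrix.of fun _ _ => 1) 0
      (Matrix.of fun p _ => M (Sum.inr p) (Sum.inl ()))
      (Matrix.of fun p q => M (Sum.inr p) (Sum.inr q)) := by
    ext p q
    cases p with
    | inl u =>
        cases u
        cases q with
        | inl v => cases v; simpa using h (Sum.inl ())
        | inr v => simpa using h (Sum.inr v)
    | inr u => cases q <;> rfl
  rw [hM, Matrix.det_fromBlocks_zero₁₂]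
  simp [Matrix.det_unique]

def blkD {k : ℕ} (n : Fin k → ℕ) (C : ∀ i, Matrix (Fin (n i)) (Fin (n i)) ℝ) :
    Matrix (Σ i : Fin k, Fin (n i)) (Σ i : Fin k, Fin (n i)) ℝ :=
  Matrix.of fun p q =>
    if h : p.1 = q.1 then C p.1 p.2 (Fin.cast (congrArg n h.symm) q.2) else 0

def blkEquiv {k : ℕ} (n : Fin k → ℕ) (a : Fin k) :
    Fin (n a) ≃ { x : Σ i : Fin k, Fin (n i) // x.1 = a } where
  toFun := fun s => ⟨⟨a, s⟩, rfl⟩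
  invFun := fun x => Fin.cast (congrArg n x.2) x.1.2
  left_inv := fun s => rfl
  right_inv := by
    rintro ⟨⟨i, s⟩, h⟩
    subst h
    rfl

lemma blkD_det {k : ℕ} (n : Fin k → ℕ) (C : ∀ i, Matrix (Fin (n i)) (Fin (n i)) ℝ) :
    (blkD n C).det = ∏ i, (C i).det := by
  classical
  have hbt : (blkD n C).BlockTriangular Sigma.fst := by
    intro p q hlt
    exact dif_neg hlt.ne'
  rw [hbt.det_fintype]
  refine Finset.prod_congr rfl fun a _ => ?_
  rw [← Matrix.det_reindex_self (blkEquiv n a).symm ((blkD n C).toSquareBlock Sigma.fst a)]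
  congr 1
  ext s t
  simp only [Matrix.reindex_apply, Matrix.submatrix_apply, Equiv.symm_symm,
    Matrix.toSquareBlock_def, blkEquiv, Equiv.coe_fn_mk]
  show (blkD n C) ⟨a, s⟩ ⟨a, t⟩ = C a s t
  rw [show (blkD n C) ⟨a, s⟩ ⟨a, t⟩ = C a s (Fin.cast rfl t) from dif_pos rfl]
  exact congrArg (C a s) (Fin.ext rfl)

lemma det_updateColumn_single {m : ℕ} (hm : 0 < m) (Bm : Matrix (Fin m) (Fin m) ℝ) :
    (Bm.updateCol ⟨0, hm⟩ (Pi.single ⟨0, hm⟩ 1)).det = (deleteFirst Bm).det := by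
  obtain ⟨m', rfl⟩ : ∃ m', m = m' + 1 := ⟨m - 1, by omega⟩
  have h0 : (⟨0, hm⟩ : Fin (m' + 1)) = 0 := rfl
  rw [h0, Matrix.det_succ_column_zero, Finset.sum_eq_single (0 : Fin (m' + 1))]
  · rw [Matrix.updateCol_self]
    simp only [Fin.val_zero, pow_zero, one_mul, Pi.single_eq_same, Fin.succAbove_zero]
    have hsub : (Bm.updateCol 0 (Pi.single 0 1)).submatrix Fin.succ Fin.succ
        = deleteFirst Bm := by
      ext s t
      simp only [Matrix.submatrix_apply, deleteFirst]
      rw [Matrix.updateCol_ne (Fin.succ_ne_zero t)]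
      rfl
    exact hsub ▸ rfl
  · intro i _ hi
    rw [Matrix.updateCol_self, Pi.single_eq_of_ne hi]
    ring
  · intro h
    exact absurd (Finset.mem_univ _) h

noncomputable def ev {k : ℕ} (n : Fin k → ℕ) (hn : ∀ i, 1 ≤ n i) (i : Fin k) :
    (Unit ⊕ Σ i : Fin k, Fin (n i)) → ℝ :=
  Pi.single (Sum.inr ⟨i, ⟨0, hn i⟩⟩) 1

lemma star_inr_inr {k : ℕ} (b : ℝ) (n : Fin k → ℕ) (B : ∀ i, Matrix (Fin (n i)) (Fin (n i)) ℝ)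
    (l m : Fin k) (s : Fin (n l)) (t : Fin (n m)) :
    starMatrix b n B (Sum.inr ⟨l, s⟩) (Sum.inr ⟨m, t⟩) =
      if h : l = m then B l s (Fin.cast (congrArg n h.symm) t) else 0 := rfl

lemma sum_ev_inl {k : ℕ} (n : Fin k → ℕ) (hn : ∀ i, 1 ≤ n i) :
    (∑ j, (-1 : ℝ) • ev n hn j) (Sum.inl ()) = 0 := by
  rw [Finset.sum_apply]
  refine Finset.sum_eq_zero fun j _ => ?_
  simp [ev, Pi.single_apply]

lemma sum_ev_inr {k : ℕ} (n : Fin k → ℕ) (hn : ∀ i, 1 ≤ n i) (l : Fin k) (s : Fin (n l)) :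
    (∑ j, (-1 : ℝ) • ev n hn j) (Sum.inr ⟨l, s⟩) = if (s : ℕ) = 0 then -1 else 0 := by
  rw [Finset.sum_apply, Finset.sum_eq_single l]
  · simp only [Pi.smul_apply, ev, Pi.single_apply, smul_eq_mul]
    by_cases h : (s : ℕ) = 0
    · have : (Sum.inr ⟨l, s⟩ : Unit ⊕ Σ i : Fin k, Fin (n i)) = Sum.inr ⟨l, ⟨0, hn l⟩⟩ := by
        congr 1
        exact Sigma.eq rfl (Fin.ext h)
      rw [if_pos this, if_pos h]
      ring
    · have : (Sum.inr ⟨l, s⟩ : Unit ⊕ Σ i : Fin k, Fin (n i)) ≠ Sum.inr ⟨l, ⟨0, hn l⟩⟩ := by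
        intro hc
        apply h
        have hs : s = ⟨0, hn l⟩ := by
          injection hc with hc'
          exact (Sigma.mk.inj_iff.mp hc').2.eq
        exact congrArg Fin.val hs
      rw [if_neg this, if_neg h]
      ring
  · intro j _ hj
    simp only [Pi.smul_apply, ev, Pi.single_apply, smul_eq_mul]
    rw [if_neg]
    · ring
    · intro hc
      injection hc with hc'
      exact hj (Sigma.mk.inj_iff.mp hc').1.symm
  · intro h
    exact absurd (Finset.mem_univ _) h

noncomputable def Pm {k : ℕ} (b : ℝ) (n : Fin k → ℕ) (hn : ∀ i, 1 ≤ n i)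
    (B : ∀ i, Matrix (Fin (n i)) (Fin (n i)) ℝ) (i j : Fin k) :
    Matrix (Unit ⊕ Σ i : Fin k, Fin (n i)) (Unit ⊕ Σ i : Fin k, Fin (n i)) ℝ :=
  ((starMatrix b n B).updateRow (Sum.inl ()) (ev n hn i)).updateCol (Sum.inl ()) (ev n hn j)

lemma Pm_apply {k : ℕ} (b : ℝ) (n : Fin k → ℕ) (hn : ∀ i, 1 ≤ n i)
    (B : ∀ i, Matrix (Fin (n i)) (Fin (n i)) ℝ) (i j : Fin k)
    (p q : Unit ⊕ Σ i : Fin k, Fin (n i)) :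
    Pm b n hn B i j p q =
      if q = Sum.inl () then ev n hn j p
      else if p = Sum.inl () then ev n hn i q
      else starMatrix b n B p q := by
  simp [Pm, Matrix.updateCol_apply, Matrix.updateRow_apply]

lemma hQrow {k : ℕ} (b : ℝ) (n : Fin k → ℕ) (hn : ∀ i, 1 ≤ n i)
    (B : ∀ i, Matrix (Fin (n i)) (Fin (n i)) ℝ) (i : Fin k)
    (q : Unit ⊕ Σ i : Fin k, Fin (n i)) :
    ((Pm b n hn B i i).submatrix id
        (Equiv.swap (Sum.inl ()) (Sum.inr ⟨i, ⟨0, hn i⟩⟩))) (Sum.inl ()) q =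
      if q = Sum.inl () then 1 else 0 := by
  classical
  simp only [Matrix.submatrix_apply, id]
  by_cases hq : q = Sum.inl ()
  · subst hq
    rw [Equiv.swap_apply_left, Pm_apply, if_neg (by simp), if_pos rfl]
    simp [ev]
  · by_cases hq2 : q = Sum.inr ⟨i, ⟨0, hn i⟩⟩
    · subst hq2
      rw [Equiv.swap_apply_right, Pm_apply, if_pos rfl, if_neg hq]
      simp [ev, Pi.single_apply]
    · rw [Equiv.swap_apply_of_ne_of_ne hq hq2, Pm_apply, if_neg hq, if_pos rfl, if_neg hq]
      simp only [ev, Pi.single_apply, if_neg hq2]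

lemma hDdiag {k : ℕ} (b : ℝ) (n : Fin k → ℕ) (hn : ∀ i, 1 ≤ n i)
    (B : ∀ i, Matrix (Fin (n i)) (Fin (n i)) ℝ) (i : Fin k) :
    (Matrix.of fun p q => ((Pm b n hn B i i).submatrix id
        (Equiv.swap (Sum.inl ()) (Sum.inr ⟨i, ⟨0, hn i⟩⟩))) (Sum.inr p) (Sum.inr q)) =
      blkD n (Function.update B i ((B i).updateCol ⟨0, hn i⟩ (Pi.single ⟨0, hn i⟩ 1))) := by
  classical
  ext ⟨l, t⟩ ⟨m, s⟩
  simp only [Matrix.of_apply, Matrix.submatrix_apply, id]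
  by_cases hmi : m = i
  · subst hmi
    by_cases hs : s = ⟨0, hn m⟩
    · subst hs
      rw [Equiv.swap_apply_right, Pm_apply, if_pos rfl]
      show ev n hn m (Sum.inr ⟨l, t⟩) = _
      by_cases hlm : l = m
      · subst hlm
        show ev n hn l (Sum.inr ⟨l, t⟩) =
            dite (l = l) (fun h => (Function.update B l ((B l).updateCol ⟨0, hn l⟩
              (Pi.single ⟨0, hn l⟩ 1)) l) t (Fin.cast (congrArg n h.symm) ⟨0, hn l⟩)) (fun _ => 0)
        rw [dif_pos rfl, Function.update_self]
        have hc : (Fin.cast (congrArg n (rfl : l = l).symm) (⟨0, hn l⟩ : Fin (n l))) = ⟨0, hn l⟩ :=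
          Fin.ext rfl
        rw [hc, Matrix.updateCol_self]
        simp [ev, Pi.single_apply, Sigma.mk.inj_iff]
      · show ev n hn m (Sum.inr ⟨l, t⟩) = dite (l = m) _ _
        rw [dif_neg hlm]
        simp [ev, Pi.single_apply, Sigma.mk.inj_iff, hlm]
    · have hne : (Sum.inr ⟨m, s⟩ : Unit ⊕ Σ i : Fin k, Fin (n i)) ≠ Sum.inr ⟨m, ⟨0, hn m⟩⟩ := by
        simp [Sigma.mk.inj_iff, hs]
      rw [Equiv.swap_apply_of_ne_of_ne (by simp) hne, Pm_apply,
        if_neg (by simp), if_neg (by simp)]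
      show starMatrix b n B _ _ = _
      rw [star_inr_inr]
      by_cases hlm : l = m
      · subst hlm
        show dite (l = l) _ _ = dite (l = l) _ _
        rw [dif_pos rfl, dif_pos rfl, Function.update_self, Matrix.updateCol_ne]
        intro hc
        apply hs
        exact Fin.ext (congrArg Fin.val hc)
      · show dite (l = m) _ _ = dite (l = m) _ _
        rw [dif_neg hlm, dif_neg hlm]
  · have hne : (Sum.inr ⟨m, s⟩ : Unit ⊕ Σ i : Fin k, Fin (n i)) ≠ Sum.inr ⟨i, ⟨0, hn i⟩⟩ := by
      simp [Sigma.mk.inj_iff, hmi]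
    rw [Equiv.swap_apply_of_ne_of_ne (by simp) hne, Pm_apply,
      if_neg (by simp), if_neg (by simp)]
    show starMatrix b n B _ _ = _
    rw [star_inr_inr]
    by_cases hlm : l = m
    · subst hlm
      show dite (l = l) _ _ = dite (l = l) _ _
      rw [dif_pos rfl, dif_pos rfl, Function.update_of_ne hmi]
    · show dite (l = m) _ _ = dite (l = m) _ _
      rw [dif_neg hlm, dif_neg hlm]

lemma Pm_diag_det {k : ℕ} (b : ℝ) (n : Fin k → ℕ) (hn : ∀ i, 1 ≤ n i)
    (B : ∀ i, Matrix (Fin (n i)) (Fin (n i)) ℝ) (i : Fin k) :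
    (Pm b n hn B i i).det =
      -((deleteFirst (B i)).det * ∏ j ∈ Finset.univ.erase i, (B j).det) := by
  classical
  set σ := Equiv.swap (Sum.inl () : Unit ⊕ Σ i : Fin k, Fin (n i)) (Sum.inr ⟨i, ⟨0, hn i⟩⟩)
  have hne : (Sum.inl () : Unit ⊕ Σ i : Fin k, Fin (n i)) ≠ Sum.inr ⟨i, ⟨0, hn i⟩⟩ := by simp
  have h1 := Matrix.det_permute' σ (Pm b n hn B i i)
  rw [Equiv.Perm.sign_swap hne] at h1
  have h2 : ((Pm b n hn B i i).submatrix id σ).det = -(Pm b n hn B i i).det := by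
    rw [h1]; push_cast; ring
  have h3 : ((Pm b n hn B i i).submatrix id σ).det =
      (blkD n (Function.update B i
        ((B i).updateCol ⟨0, hn i⟩ (Pi.single ⟨0, hn i⟩ 1)))).det := by
    rw [det_unitRow _ (hQrow b n hn B i), hDdiag b n hn B i]
  have h4 : (blkD n (Function.update B i
      ((B i).updateCol ⟨0, hn i⟩ (Pi.single ⟨0, hn i⟩ 1)))).det =
      (deleteFirst (B i)).det * ∏ j ∈ Finset.univ.erase i, (B j).det := by
    rw [blkD_det]
    have hcong : ∀ l, (Function.update B i
        ((B i).updateCol ⟨0, hn i⟩ (Pi.single ⟨0, hn i⟩ 1)) l).det =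
        Function.update (fun l => (B l).det)
          i ((B i).updateCol ⟨0, hn i⟩ (Pi.single ⟨0, hn i⟩ 1)).det l := by
      intro l
      by_cases h : l = i
      · subst h; rw [Function.update_self, Function.update_self]
      · rw [Function.update_of_ne h, Function.update_of_ne h]
    rw [Finset.prod_congr rfl fun l _ => hcong l,
      Finset.prod_update_of_mem (Finset.mem_univ i),
      det_updateColumn_single (hn i) (B i)]
    congr 1
    rw [Finset.sdiff_singleton_eq_erase]
  have := h2.symm.trans h3
  rw [h4] at this
  linarith

lemma exists_ker {m : ℕ} (C : Matrix (Fin m) (Unit ⊕ Fin m) ℝ) :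
    ∃ v : (Unit ⊕ Fin m) → ℝ, v ≠ 0 ∧ C.mulVec v = 0 := by
  classical
  have hni : ¬ Function.Injective C.mulVecLin := by
    intro hinj
    have h1 := LinearMap.finrank_le_finrank_of_injective hinj
    rw [Module.finrank_fintype_fun_eq_card, Module.finrank_fintype_fun_eq_card] at h1
    simp [Fintype.card_sum] at h1
  rw [Function.not_injective_iff] at hni
  obtain ⟨x, y, hxy, hne⟩ := hni
  refine ⟨x - y, sub_ne_zero.mpr hne, ?_⟩
  have : C.mulVecLin (x - y) = 0 := by
    rw [map_sub, hxy, sub_self]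
  simpa [Matrix.mulVecLin_apply] using this

lemma sum_ix {k : ℕ} {n : Fin k → ℕ} (f : (Unit ⊕ Σ i : Fin k, Fin (n i)) → ℝ) :
    ∑ q, f q = f (Sum.inl ()) + ∑ l, ∑ s : Fin (n l), f (Sum.inr ⟨l, s⟩) := by
  rw [Fintype.sum_sum_type]
  congr 1
  · simp
  · exact Finset.sum_sigma Finset.univ (fun _ => Finset.univ) (fun x => f (Sum.inr x))

lemma Pm_offdiag_det {k : ℕ} (b : ℝ) (n : Fin k → ℕ) (hn : ∀ i, 1 ≤ n i)
    (B : ∀ i, Matrix (Fin (n i)) (Fin (n i)) ℝ) (i j : Fin k) (hij : i ≠ j) :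
    (Pm b n hn B i j).det = 0 := by
  classical
  set C : Matrix (Fin (n j)) (Unit ⊕ Fin (n j)) ℝ := Matrix.of fun t q =>
    match q with
    | Sum.inl _ => if t = (⟨0, hn j⟩ : Fin (n j)) then 1 else 0
    | Sum.inr s => B j t s with hC
  have hCl : ∀ t, C t (Sum.inl ()) = if t = (⟨0, hn j⟩ : Fin (n j)) then 1 else 0 :=
    fun _ => rfl
  have hCr : ∀ t s, C t (Sum.inr s) = B j t s := fun _ _ => rfl
  obtain ⟨v, hv0, hCv⟩ := exists_ker C
  set w : (Unit ⊕ Σ i : Fin k, Fin (n i)) → ℝ := fun q =>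
    match q with
    | Sum.inl _ => v (Sum.inl ())
    | Sum.inr ⟨l, s⟩ =>
        if h : l = j then v (Sum.inr (Fin.cast (congrArg n h) s)) else 0 with hw
  have hwl : w (Sum.inl ()) = v (Sum.inl ()) := rfl
  have hwj : ∀ s : Fin (n j), w (Sum.inr ⟨j, s⟩) = v (Sum.inr s) := by
    intro s
    show (if h : j = j then v (Sum.inr (Fin.cast (congrArg n h) s)) else 0) = v (Sum.inr s)
    rw [dif_pos rfl]
    exact congrArg (fun z => v (Sum.inr z)) (Fin.ext rfl)
  have hwne : ∀ (m : Fin k) (s : Fin (n m)), m ≠ j → w (Sum.inr ⟨m, s⟩) = 0 := by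
    intro m s hm
    show (if h : m = j then v (Sum.inr (Fin.cast (congrArg n h) s)) else 0) = 0
    rw [dif_neg hm]
  have hw0 : w ≠ 0 := by
    intro hzero
    apply hv0
    funext q
    cases q with
    | inl u =>
        cases u
        rw [← hwl]
        exact congrFun hzero (Sum.inl ())
    | inr s =>
        rw [← hwj s]
        exact congrFun hzero (Sum.inr ⟨j, s⟩)
  have hmul : (Pm b n hn B i j).mulVec w = 0 := by
    funext p
    show ∑ q, Pm b n hn B i j p q * w q = 0
    rw [sum_ix]
    cases p with
    | inl u =>
        cases u
        rw [Pm_apply, if_pos rfl]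
        have h1 : ev n hn j (Sum.inl ()) * w (Sum.inl ()) = 0 := by
          simp [ev, Pi.single_apply]
        rw [h1, zero_add]
        refine Finset.sum_eq_zero fun l _ => Finset.sum_eq_zero fun s _ => ?_
        rw [Pm_apply, if_neg (by simp), if_pos rfl]
        by_cases hl : l = i
        · subst hl
          rw [hwne l s (fun hc => hij (hc ▸ rfl)), mul_zero]
        · have : ev n hn i (Sum.inr ⟨l, s⟩) = 0 := by
            simp [ev, Pi.single_apply, Sigma.mk.inj_iff, hl]
          rw [this, zero_mul]
    | inr p0 =>
        obtain ⟨l, t⟩ := p0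
        by_cases hl : l = j
        · subst hl
          have hexp : C t (Sum.inl ()) * v (Sum.inl ()) +
              ∑ s : Fin (n l), C t (Sum.inr s) * v (Sum.inr s) = 0 := by
            have hcv := congrFun hCv t
            rw [Matrix.mulVec, dotProduct, Fintype.sum_sum_type] at hcv
            simpa using hcv
          have h1 : Pm b n hn B i l (Sum.inr ⟨l, t⟩) (Sum.inl ()) * w (Sum.inl ()) =
              C t (Sum.inl ()) * v (Sum.inl ()) := by
            rw [Pm_apply, if_pos rfl, hwl, hCl]
            congr 1
            simp only [ev, Pi.single_apply]
            by_cases ht : t = (⟨0, hn l⟩ : Fin (n l))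
            · rw [if_pos (by rw [ht]), if_pos ht]
            · rw [if_neg (by simp [Sigma.mk.inj_iff, ht]), if_neg ht]
          have h2 : ∀ m, (∑ s : Fin (n m),
              Pm b n hn B i l (Sum.inr ⟨l, t⟩) (Sum.inr ⟨m, s⟩) * w (Sum.inr ⟨m, s⟩)) =
              if m = l then ∑ s : Fin (n l), C t (Sum.inr s) * v (Sum.inr s) else 0 := by
            intro m
            by_cases hm : m = l
            · subst hm
              rw [if_pos rfl]
              refine Finset.sum_congr rfl fun s _ => ?_
              rw [Pm_apply, if_neg (by simp), if_neg (by simp), star_inr_inr, dif_pos rfl,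
                hwj s, hCr]
              congr 2
            · rw [if_neg hm]
              refine Finset.sum_eq_zero fun s _ => ?_
              rw [Pm_apply, if_neg (by simp), if_neg (by simp), star_inr_inr,
                dif_neg (fun hc => hm hc.symm), zero_mul]
          rw [h1, Finset.sum_congr rfl fun m _ => h2 m, Finset.sum_ite_eq' Finset.univ l
            (fun _ => ∑ s : Fin (n l), C t (Sum.inr s) * v (Sum.inr s))]
          simpa using hexp
        · have hA : Pm b n hn B i j (Sum.inr ⟨l, t⟩) (Sum.inl ()) * w (Sum.inl ()) = 0 := by
            rw [Pm_apply, if_pos rfl]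
            have : ev n hn j (Sum.inr ⟨l, t⟩) = 0 := by
              simp [ev, Pi.single_apply, Sigma.mk.inj_iff, hl]
            rw [this, zero_mul]
          rw [hA, zero_add]
          refine Finset.sum_eq_zero fun m _ => Finset.sum_eq_zero fun s _ => ?_
          by_cases hm : m = j
          · subst hm
            rw [Pm_apply, if_neg (by simp), if_neg (by simp), star_inr_inr, dif_neg hl,
              zero_mul]
          · rw [hwne m s hm, mul_zero]
  exact Matrix.exists_mulVec_eq_zero_iff.mp ⟨w, hw0, hmul⟩

end Aux

theorem starMatrix_det (k : ℕ) (hk : 1 ≤ k) (b : ℝ) (n : Fin k → ℕ)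
    (hn : ∀ i, 1 ≤ n i) (B : ∀ i, Matrix (Fin (n i)) (Fin (n i)) ℝ) :
    (starMatrix b n B).det =
      b * ∏ i, (B i).det -
        ∑ i, (deleteFirst (B i)).det * ∏ j ∈ Finset.univ.erase i, (B j).det := by
  classical
  have hrow : starMatrix b n B (Sum.inl ()) =
      b • (Pi.single (Sum.inl ()) 1 : (Unit ⊕ Σ i : Fin k, Fin (n i)) → ℝ) +
        ∑ j, (-1 : ℝ) • ev n hn j := by
    funext q
    cases q with
    | inl u =>
        cases u
        show b = (b • (Pi.single (Sum.inl ()) 1 : (Unit ⊕ Σ i : Fin k, Fin (n i)) → ℝ) +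
          ∑ j, (-1 : ℝ) • ev n hn j) (Sum.inl ())
        rw [Pi.add_apply, sum_ev_inl]
        simp
    | inr p =>
        obtain ⟨l, s⟩ := p
        show (if (s : ℕ) = 0 then (-1 : ℝ) else 0) =
            (b • (Pi.single (Sum.inl ()) 1 : (Unit ⊕ Σ i : Fin k, Fin (n i)) → ℝ) +
              ∑ j, (-1 : ℝ) • ev n hn j) (Sum.inr ⟨l, s⟩)
        rw [Pi.add_apply, sum_ev_inr]
        simp [Pi.single_apply]
  have hterm1 : ((starMatrix b n B).updateRow (Sum.inl ())
      (Pi.single (Sum.inl ()) 1)).det = ∏ i, (B i).det := by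
    rw [det_unitRow _ (fun q => by
      rw [congrFun (Matrix.updateRow_self
        (M := starMatrix b n B) (i := Sum.inl ()) (b := Pi.single (Sum.inl ()) 1)) q,
        Pi.single_apply])]
    have hDD : (Matrix.of fun p q => ((starMatrix b n B).updateRow (Sum.inl ())
        (Pi.single (Sum.inl ()) 1)) (Sum.inr p) (Sum.inr q)) = blkD n B := by
      ext ⟨l, t⟩ ⟨m, s⟩
      rw [Matrix.of_apply, Matrix.updateRow_ne
        (by simp : (Sum.inr ⟨l, t⟩ : Unit ⊕ Σ i : Fin k, Fin (n i)) ≠ Sum.inl ())]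
      rfl
    rw [hDD, blkD_det]
  have hterm2 : ∀ i, ((starMatrix b n B).updateRow (Sum.inl ()) (ev n hn i)).det =
      ∑ j, (-1) * (Pm b n hn B i j).det := by
    intro i
    have hcol : (fun p => ((starMatrix b n B).updateRow (Sum.inl ()) (ev n hn i)) p
        (Sum.inl ())) = ∑ j, (-1 : ℝ) • ev n hn j := by
      funext p
      cases p with
      | inl u =>
          cases u
          rw [congrFun (Matrix.updateRow_self
            (M := starMatrix b n B) (i := Sum.inl ()) (b := ev n hn i)) (Sum.inl ()),
            sum_ev_inl]
          simp [ev, Pi.single_apply]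
      | inr p0 =>
          obtain ⟨l, s⟩ := p0
          rw [Matrix.updateRow_ne
            (by simp : (Sum.inr ⟨l, s⟩ : Unit ⊕ Σ i : Fin k, Fin (n i)) ≠ Sum.inl ()),
            sum_ev_inr]
          rfl
    conv_lhs => rw [← Matrix.updateCol_eq_self
      ((starMatrix b n B).updateRow (Sum.inl ()) (ev n hn i)) (Sum.inl ())]
    rw [hcol, det_updateColumn_sum'']
    refine Finset.sum_congr rfl fun j _ => ?_
    rw [Matrix.det_updateCol_smul]
    rfl
  conv_lhs => rw [← Matrix.updateRow_eq_self (starMatrix b n B) (Sum.inl ()), hrow]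
  rw [Matrix.det_updateRow_add, Matrix.det_updateRow_smul, det_updateRow_sum'']
  simp only [Matrix.det_updateRow_smul]
  rw [hterm1]
  have hsum : ∀ a, (-1) * ((starMatrix b n B).updateRow (Sum.inl ()) (ev n hn a)).det =
      -((deleteFirst (B a)).det * ∏ j ∈ Finset.univ.erase a, (B j).det) := by
    intro a
    rw [hterm2 a, Finset.sum_eq_single a
      (fun j _ hj => by rw [Pm_offdiag_det b n hn B a j (fun h => hj h.symm), mul_zero])
      (fun h => absurd (Finset.mem_univ a) h), Pm_diag_det]
    ring
  rw [Finset.sum_congr rfl fun a _ => hsum a]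
  rw [Finset.sum_neg_distrib]
  ring
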